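/- Let δ, γ ∈ (−1, +∞) and let h₁, h₂ : [0,∞) → ℝ be continuous with 0 ≤ hᵢ(x) ≤ 1 for all x ≥ 0 (i = 1, 2). Then for every x ∈ [0,∞], |F(x; h₁) − F(x; h₂)| ≤ M₃(δ,γ)·‖h₁ − h₂‖∞, where M₃(δ,γ) := (√π·max(1,1+δ)^{1/2} / (4·min(1,1+δ)²·min(1,1+γ)^{1/2})) · (2|δ| + |δ−γ|·max(1,1+δ)/(min(1,1+δ)·min(1,1+γ))) and ‖h₁ − h₂‖∞ := sup_{x ≥ 0} |h₁(x) − h₂(x)|. In particular, the same bound holds for |F(+∞; h₁) − F(+∞; h₂)|. -/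

import Mathlib

open Real Filter Set MeasureTheory

/-- `F(x; h)` from the paper. -/
noncomputable def Fint (δ γ : ℝ) (h : ℝ → ℝ) (x : ℝ) : ℝ :=
  ∫ w in (0:ℝ)..x,
    Real.exp (-(∫ z in (0:ℝ)..w, 2*z*(1+γ*h z)/(1+δ*h z))) * (1/(1+δ*h w))

/-- The constant `M₃(δ,γ)` from the paper. -/
noncomputable def M3 (δ γ : ℝ) : ℝ :=
  (Real.sqrt π * (max 1 (1+δ)) ^ ((1:ℝ)/2) /
    (4 * (min 1 (1+δ))^2 * (min 1 (1+γ)) ^ ((1:ℝ)/2))) *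
  (2*|δ| + |δ-γ| * (max 1 (1+δ)) / ((min 1 (1+δ)) * (min 1 (1+γ))))

lemma exp_neg_diff_le {a b C : ℝ} (ha : C ≤ a) (hb : C ≤ b) :
    |Real.exp (-a) - Real.exp (-b)| ≤ Real.exp (-C) * |a - b| := by
  wlog hab : b ≤ a generalizing a b
  · rw [abs_sub_comm, abs_sub_comm a b]; exact this hb ha (le_of_not_ge hab)
  have h1 : Real.exp (-a) ≤ Real.exp (-b) := Real.exp_le_exp.2 (by linarith)
  rw [abs_of_nonpos (by linarith), abs_of_nonneg (by linarith)]
  have hsplit : Real.exp (-b) * Real.exp (-(a - b)) = Real.exp (-a) := by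
    rw [← Real.exp_add]; ring_nf
  have h2 : -(a - b) + 1 ≤ Real.exp (-(a - b)) := Real.add_one_le_exp _
  have h3 : Real.exp (-b) ≤ Real.exp (-C) := Real.exp_le_exp.2 (by linarith)
  nlinarith [Real.exp_pos (-b), Real.exp_pos (-C), Real.exp_pos (-(a - b))]

lemma rpow_two_eq_sq (x : ℝ) : x ^ (2:ℝ) = x ^ 2 := by
  rw [show (2:ℝ) = ((2:ℕ):ℝ) by norm_num, Real.rpow_natCast]

set_option maxHeartbeats 1000000 in
theorem F_Lipschitz_in_h (δ γ : ℝ) (hδ : -1 < δ) (hγ : -1 < γ)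
    (h₁ h₂ : ℝ → ℝ)
    (hcont₁ : ContinuousOn h₁ (Set.Ici 0)) (hcont₂ : ContinuousOn h₂ (Set.Ici 0))
    (hb₁ : ∀ x ≥ (0:ℝ), 0 ≤ h₁ x ∧ h₁ x ≤ 1)
    (hb₂ : ∀ x ≥ (0:ℝ), 0 ≤ h₂ x ∧ h₂ x ≤ 1) :
    (∀ x ≥ (0:ℝ),
      |Fint δ γ h₁ x - Fint δ γ h₂ x| ≤ M3 δ γ * ⨆ t : Set.Ici (0:ℝ), |h₁ t - h₂ t|) ∧
    (∀ L₁ L₂ : ℝ, Tendsto (Fint δ γ h₁) atTop (nhds L₁) →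
      Tendsto (Fint δ γ h₂) atTop (nhds L₂) →
      |L₁ - L₂| ≤ M3 δ γ * ⨆ t : Set.Ici (0:ℝ), |h₁ t - h₂ t|) := by
  -- constants
  set m := min 1 (1+δ) with hm_def
  set Mx := max 1 (1+δ) with hMx_def
  set n := min 1 (1+γ) with hn_def
  have hm : 0 < m := lt_min one_pos (by linarith)
  have hMx : 0 < Mx := lt_of_lt_of_le one_pos (le_max_left _ _)
  have hn : 0 < n := lt_min one_pos (by linarith)
  set c := n / Mx with hc_def
  have hc : 0 < c := div_pos hn hMx
  set K := ⨆ t : Set.Ici (0:ℝ), |h₁ t - h₂ t| with hK_def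
  have hbdd : BddAbove (Set.range fun t : Set.Ici (0:ℝ) => |h₁ t - h₂ t|) := by
    refine ⟨1, ?_⟩
    rintro y ⟨t, rfl⟩
    have hx1 := hb₁ t t.2; have hx2 := hb₂ t t.2
    rw [abs_sub_le_iff]; constructor <;> linarith [hx1.1, hx1.2, hx2.1, hx2.2]
  have hKt : ∀ t ≥ (0:ℝ), |h₁ t - h₂ t| ≤ K := fun t ht => le_ciSup hbdd (⟨t, ht⟩ : Set.Ici (0:ℝ))
  have hK0 : 0 ≤ K := le_trans (abs_nonneg _) (hKt 0 le_rfl)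
  -- denominator bounds
  have hden : ∀ (h : ℝ → ℝ), (∀ x ≥ (0:ℝ), 0 ≤ h x ∧ h x ≤ 1) → ∀ t ≥ (0:ℝ),
      m ≤ 1 + δ * h t ∧ 1 + δ * h t ≤ Mx ∧ n ≤ 1 + γ * h t := by
    intro h hb t ht
    obtain ⟨h0, h1⟩ := hb t ht
    refine ⟨?_, ?_, ?_⟩
    · rcases le_or_gt 0 δ with hs | hs
      · exact le_trans (min_le_left _ _) (by nlinarith)
      · exact le_trans (min_le_right _ _) (by nlinarith)
    · rcases le_or_gt 0 δ with hs | hs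
      · exact le_trans (by nlinarith) (le_max_right (1:ℝ) (1+δ))
      · exact le_trans (by nlinarith) (le_max_left (1:ℝ) (1+δ))
    · rcases le_or_gt 0 γ with hs | hs
      · exact le_trans (min_le_left _ _) (by nlinarith)
      · exact le_trans (min_le_right _ _) (by nlinarith)
  have hd₁ := hden h₁ hb₁
  have hd₂ := hden h₂ hb₂
  -- continuity of the inner integrand
  have hgcont : ∀ (h : ℝ → ℝ), ContinuousOn h (Set.Ici 0) → (∀ x ≥ (0:ℝ), 0 ≤ h x ∧ h x ≤ 1) →
      ContinuousOn (fun z => 2*z*(1+γ*h z)/(1+δ*h z)) (Set.Ici 0) := by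
    intro h hcont hb
    apply ContinuousOn.div
    · exact ((continuous_const.mul continuous_id).continuousOn).mul
        (continuousOn_const.add (continuousOn_const.mul hcont))
    · exact continuousOn_const.add (continuousOn_const.mul hcont)
    · intro t ht
      exact (lt_of_lt_of_le hm (hden h hb t ht).1).ne'
  have hg₁cont := hgcont h₁ hcont₁ hb₁
  have hg₂cont := hgcont h₂ hcont₂ hb₂
  -- interval integrability of inner integrands on [0, w], w ≥ 0
  have hg_ii : ∀ (h : ℝ → ℝ), ContinuousOn (fun z => 2*z*(1+γ*h z)/(1+δ*h z)) (Set.Ici 0) →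
      ∀ w ≥ (0:ℝ), IntervalIntegrable (fun z => 2*z*(1+γ*h z)/(1+δ*h z)) volume 0 w := by
    intro h hcg w hw
    exact (hcg.mono (by rw [Set.uIcc_of_le hw]; exact Set.Icc_subset_Ici_self)).intervalIntegrable
  -- lower bound on the inner integral
  have hGlb : ∀ (h : ℝ → ℝ), (∀ x ≥ (0:ℝ), 0 ≤ h x ∧ h x ≤ 1) →
      ContinuousOn (fun z => 2*z*(1+γ*h z)/(1+δ*h z)) (Set.Ici 0) → ∀ w ≥ (0:ℝ),
      c * w^2 ≤ ∫ z in (0:ℝ)..w, 2*z*(1+γ*h z)/(1+δ*h z) := by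
    intro h hb hcg w hw
    have hint : ∫ z in (0:ℝ)..w, c * (2*z) = c * w^2 := by
      rw [intervalIntegral.integral_const_mul]
      have h2 : ∫ z in (0:ℝ)..w, 2*z = 2 * ∫ z in (0:ℝ)..w, z := by
        rw [← intervalIntegral.integral_const_mul]
      rw [h2, integral_id]; ring
    calc c * w^2 = ∫ z in (0:ℝ)..w, c * (2*z) := hint.symm
      _ ≤ ∫ z in (0:ℝ)..w, 2*z*(1+γ*h z)/(1+δ*h z) := by
        apply intervalIntegral.integral_mono_on hw
          ((continuous_const.mul (continuous_const.mul continuous_id)).intervalIntegrable _ _)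
          (hg_ii h hcg w hw)
        intro z hz
        obtain ⟨hz1, hz2, hz3⟩ := hden h hb z hz.1
        have hzpos : (0:ℝ) ≤ 2 * z := by linarith [hz.1]
        have hrat : c ≤ (1+γ*h z)/(1+δ*h z) := by
          rw [hc_def, div_le_div_iff₀ hMx (lt_of_lt_of_le hm hz1)]
          nlinarith
        calc c * (2*z) = (2*z) * c := by ring
          _ ≤ (2*z) * ((1+γ*h z)/(1+δ*h z)) := mul_le_mul_of_nonneg_left hrat hzpos
          _ = 2*z*(1+γ*h z)/(1+δ*h z) := by ring
  -- bound on difference of inner integrals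
  have hGdiff : ∀ w ≥ (0:ℝ),
      |(∫ z in (0:ℝ)..w, 2*z*(1+γ*h₁ z)/(1+δ*h₁ z)) -
        ∫ z in (0:ℝ)..w, 2*z*(1+γ*h₂ z)/(1+δ*h₂ z)| ≤ |δ-γ| * K / m^2 * w^2 := by
    intro w hw
    rw [← intervalIntegral.integral_sub (hg_ii h₁ hg₁cont w hw) (hg_ii h₂ hg₂cont w hw)]
    have hbound : IntervalIntegrable (fun z => |δ-γ| * K / m^2 * (2*z)) volume 0 w :=
      (continuous_const.mul (continuous_const.mul continuous_id)).intervalIntegrable _ _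
    have key := intervalIntegral.norm_integral_le_abs_of_norm_le (μ := volume) (a := 0) (b := w)
      (f := fun z => 2*z*(1+γ*h₁ z)/(1+δ*h₁ z) - 2*z*(1+γ*h₂ z)/(1+δ*h₂ z))
      ?_ hbound
    · have hval : ∫ z in (0:ℝ)..w, |δ-γ| * K / m^2 * (2*z) = |δ-γ| * K / m^2 * w^2 := by
        rw [intervalIntegral.integral_const_mul]
        have h2 : ∫ z in (0:ℝ)..w, 2*z = 2 * ∫ z in (0:ℝ)..w, z := by
          rw [← intervalIntegral.integral_const_mul]
        rw [h2, integral_id]; ring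
      have hge : (0:ℝ) ≤ |δ-γ| * K / m^2 * w^2 :=
        mul_nonneg (div_nonneg (mul_nonneg (abs_nonneg _) hK0) (sq_nonneg m)) (sq_nonneg w)
      rw [hval, abs_of_nonneg hge] at key
      simpa using key
    · filter_upwards [MeasureTheory.ae_restrict_mem measurableSet_uIoc] with t ht
      rw [Set.uIoc_of_le hw] at ht
      have ht0 : (0:ℝ) ≤ t := le_of_lt ht.1
      obtain ⟨hA1, hA2, hA3⟩ := hd₁ t ht0
      obtain ⟨hB1, hB2, hB3⟩ := hd₂ t ht0
      have hd1pos : (0:ℝ) < 1 + δ * h₁ t := lt_of_lt_of_le hm hA1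
      have hd2pos : (0:ℝ) < 1 + δ * h₂ t := lt_of_lt_of_le hm hB1
      have keyid : 2*t*(1+γ*h₁ t)/(1+δ*h₁ t) - 2*t*(1+γ*h₂ t)/(1+δ*h₂ t)
          = 2*t*((γ-δ)*(h₁ t - h₂ t))/((1+δ*h₁ t)*(1+δ*h₂ t)) := by
        rw [div_sub_div _ _ hd1pos.ne' hd2pos.ne']
        ring
      rw [Real.norm_eq_abs, keyid, abs_div]
      have h2t0 : (0:ℝ) ≤ 2*t := by linarith
      have hnum : |2*t*((γ-δ)*(h₁ t - h₂ t))| ≤ 2*t*(|δ-γ| *K) := by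
        rw [abs_mul, abs_of_nonneg h2t0, abs_mul, abs_sub_comm γ δ]
        exact mul_le_mul_of_nonneg_left
          (mul_le_mul_of_nonneg_left (hKt t ht0) (abs_nonneg _)) h2t0
      have hdenl : m^2 ≤ |(1+δ*h₁ t)*(1+δ*h₂ t)| := by
        rw [abs_of_nonneg (mul_nonneg hd1pos.le hd2pos.le)]; nlinarith
      calc |2*t*((γ-δ)*(h₁ t - h₂ t))| / |(1+δ*h₁ t)*(1+δ*h₂ t)|
          ≤ (2*t*(|δ-γ| *K)) / m^2 :=
            div_le_div₀ (mul_nonneg h2t0 (mul_nonneg (abs_nonneg _) hK0)) hnum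
              (pow_pos hm 2) hdenl
        _ = |δ-γ| * K / m^2 * (2*t) := by ring
  -- pointwise bound on integrand difference
  set f₁ : ℝ → ℝ := fun w => Real.exp (-(∫ z in (0:ℝ)..w, 2*z*(1+γ*h₁ z)/(1+δ*h₁ z))) *
    (1/(1+δ*h₁ w)) with hf₁_def
  set f₂ : ℝ → ℝ := fun w => Real.exp (-(∫ z in (0:ℝ)..w, 2*z*(1+γ*h₂ z)/(1+δ*h₂ z))) *
    (1/(1+δ*h₂ w)) with hf₂_def
  set bnd : ℝ → ℝ := fun w => (|δ|/m^2 + |δ-γ|/m^3 * w^2) * Real.exp (-(c*w^2)) * K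
    with hbnd_def
  have hbnd_nonneg : ∀ w, 0 ≤ bnd w := fun w =>
    mul_nonneg (mul_nonneg (add_nonneg (div_nonneg (abs_nonneg _) (pow_pos hm 2).le)
      (mul_nonneg (div_nonneg (abs_nonneg _) (pow_pos hm 3).le) (sq_nonneg w)))
      (Real.exp_pos _).le) hK0
  have key : ∀ w ≥ (0:ℝ), |f₁ w - f₂ w| ≤ bnd w := by
    intro w hw
    set a := ∫ z in (0:ℝ)..w, 2*z*(1+γ*h₁ z)/(1+δ*h₁ z) with ha_def
    set b := ∫ z in (0:ℝ)..w, 2*z*(1+γ*h₂ z)/(1+δ*h₂ z) with hb_def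
    have hca : c * w^2 ≤ a := by rw [ha_def]; exact hGlb h₁ hb₁ hg₁cont w hw
    have hcb : c * w^2 ≤ b := by rw [hb_def]; exact hGlb h₂ hb₂ hg₂cont w hw
    have hab : |a - b| ≤ |δ-γ| * K / m^2 * w^2 := by
      rw [ha_def, hb_def]; exact hGdiff w hw
    obtain ⟨hA1, hA2, hA3⟩ := hd₁ w hw
    obtain ⟨hB1, hB2, hB3⟩ := hd₂ w hw
    have hd1pos : (0:ℝ) < 1 + δ * h₁ w := lt_of_lt_of_le hm hA1
    have hd2pos : (0:ℝ) < 1 + δ * h₂ w := lt_of_lt_of_le hm hB1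
    have hsplit : f₁ w - f₂ w = Real.exp (-a) * (1/(1+δ*h₁ w) - 1/(1+δ*h₂ w)) +
        (Real.exp (-a) - Real.exp (-b)) * (1/(1+δ*h₂ w)) := by
      simp only [hf₁_def, hf₂_def, ha_def, hb_def]; ring
    have e1 : |Real.exp (-a) * (1/(1+δ*h₁ w) - 1/(1+δ*h₂ w))| ≤
        Real.exp (-(c*w^2)) * (|δ| * K / m^2) := by
      rw [abs_mul, abs_of_nonneg (Real.exp_pos _).le]
      have hid : 1/(1+δ*h₁ w) - 1/(1+δ*h₂ w) = δ*(h₂ w - h₁ w)/((1+δ*h₁ w)*(1+δ*h₂ w)) := by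
        field_simp
        ring
      have habs : |1/(1+δ*h₁ w) - 1/(1+δ*h₂ w)| ≤ |δ| * K / m^2 := by
        rw [hid, abs_div]
        have h1 : |δ*(h₂ w - h₁ w)| ≤ |δ| * K := by
          rw [abs_mul]
          exact mul_le_mul_of_nonneg_left (by rw [abs_sub_comm]; exact hKt w hw) (abs_nonneg δ)
        have h2 : m^2 ≤ |(1+δ*h₁ w)*(1+δ*h₂ w)| := by
          rw [abs_of_nonneg (mul_nonneg hd1pos.le hd2pos.le)]; nlinarith
        exact div_le_div₀ (mul_nonneg (abs_nonneg _) hK0) h1 (pow_pos hm 2) h2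
      exact mul_le_mul (Real.exp_le_exp.2 (by linarith)) habs (abs_nonneg _) (Real.exp_pos _).le
    have e2 : |(Real.exp (-a) - Real.exp (-b)) * (1/(1+δ*h₂ w))| ≤
        Real.exp (-(c*w^2)) * (|δ-γ| * K / m^2 * w^2) * (1/m) := by
      rw [abs_mul]
      have h1 : |Real.exp (-a) - Real.exp (-b)| ≤
          Real.exp (-(c*w^2)) * (|δ-γ| * K / m^2 * w^2) :=
        le_trans (exp_neg_diff_le hca hcb)
          (mul_le_mul_of_nonneg_left hab (Real.exp_pos _).le)
      have h2 : |1/(1+δ*h₂ w)| ≤ 1/m := by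
        rw [abs_of_nonneg (le_of_lt (by positivity))]
        exact div_le_div₀ one_pos.le le_rfl hm hB1
      have hge : (0:ℝ) ≤ Real.exp (-(c*w^2)) * (|δ-γ| * K / m^2 * w^2) :=
        mul_nonneg (Real.exp_pos _).le
          (mul_nonneg (div_nonneg (mul_nonneg (abs_nonneg _) hK0) (sq_nonneg m)) (sq_nonneg w))
      exact mul_le_mul h1 h2 (abs_nonneg _) hge
    calc |f₁ w - f₂ w| ≤ |Real.exp (-a) * (1/(1+δ*h₁ w) - 1/(1+δ*h₂ w))| +
          |(Real.exp (-a) - Real.exp (-b)) * (1/(1+δ*h₂ w))| := by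
          rw [hsplit]; exact abs_add_le _ _
      _ ≤ Real.exp (-(c*w^2)) * (|δ| * K / m^2) +
          Real.exp (-(c*w^2)) * (|δ-γ| * K / m^2 * w^2) * (1/m) := add_le_add e1 e2
      _ = bnd w := by rw [hbnd_def]; ring
  -- integrability of the bound on Ioi 0
  have i0 : IntegrableOn (fun w : ℝ => Real.exp (-(c*w^2))) (Set.Ioi 0) := by
    have h := (integrable_exp_neg_mul_sq hc).integrableOn (s := Set.Ioi 0)
    exact h.congr_fun (fun w _ => by beta_reduce; rw [neg_mul]) measurableSet_Ioi
  have i2 : IntegrableOn (fun w : ℝ => w^2 * Real.exp (-(c*w^2))) (Set.Ioi 0) := by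
    have h := integrableOn_rpow_mul_exp_neg_mul_sq hc (s := 2) (by norm_num)
    refine h.congr_fun (fun w _ => ?_) measurableSet_Ioi
    beta_reduce; rw [rpow_two_eq_sq, neg_mul]
  have hsum : bnd = fun w => (|δ|/m^2 * Real.exp (-(c*w^2)) +
      |δ-γ|/m^3 * (w^2 * Real.exp (-(c*w^2)))) * K := by
    funext w; rw [hbnd_def]; ring
  have ibnd : IntegrableOn bnd (Set.Ioi 0) := by
    rw [hsum]
    exact (((i0.const_mul _).add (i2.const_mul _)).mul_const K)
  -- values of the Gaussian integrals
  have hI0 : ∫ w in Set.Ioi (0:ℝ), Real.exp (-(c*w^2)) = Real.sqrt (π/c) / 2 := by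
    rw [show (fun w : ℝ => Real.exp (-(c*w^2))) = fun w : ℝ => Real.exp (-c*w^2) from
      funext fun w => by rw [neg_mul]]
    exact integral_gaussian_Ioi c
  have hI2 : ∫ w in Set.Ioi (0:ℝ), w^2 * Real.exp (-(c*w^2)) =
      Real.sqrt π / (4 * c ^ ((3:ℝ)/2)) := by
    have h := integral_rpow_mul_exp_neg_mul_rpow (p := 2) (q := 2) (b := c)
      (by norm_num) (by norm_num) hc
    have heq : ∫ w in Set.Ioi (0:ℝ), w^2 * Real.exp (-(c*w^2)) =
        ∫ x in Set.Ioi (0:ℝ), x ^ (2:ℝ) * Real.exp (-c * x ^ (2:ℝ)) := by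
      refine setIntegral_congr_fun measurableSet_Ioi (fun x _ => ?_)
      rw [rpow_two_eq_sq, neg_mul]
    rw [heq, h]
    have hG : Real.Gamma (((2:ℝ)+1)/2) = Real.sqrt π / 2 := by
      rw [show ((2:ℝ)+1)/2 = 1/2 + 1 by norm_num,
        Real.Gamma_add_one (by norm_num : (1/2:ℝ) ≠ 0), Real.Gamma_one_half_eq]
      ring
    rw [hG, show (-((2:ℝ)+1)/2) = -((3:ℝ)/2) by norm_num, Real.rpow_neg hc.le]
    have hcp : (0:ℝ) < c ^ ((3:ℝ)/2) := Real.rpow_pos_of_pos hc _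
    rw [eq_div_iff (by positivity : (0:ℝ) < 4 * c ^ ((3:ℝ)/2)).ne']
    have hh : (c ^ ((3:ℝ)/2))⁻¹ * c ^ ((3:ℝ)/2) = 1 := inv_mul_cancel₀ hcp.ne'
    linear_combination Real.sqrt π * hh
  -- the coefficient identity
  have hcoeff : |δ|/m^2 * (Real.sqrt (π/c) / 2) +
      |δ-γ|/m^3 * (Real.sqrt π / (4 * c ^ ((3:ℝ)/2))) = M3 δ γ := by
    have hM3 : M3 δ γ = (Real.sqrt π * Real.sqrt Mx / (4 * m^2 * Real.sqrt n)) *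
        (2*|δ| + |δ-γ| * Mx / (m * n)) := by
      simp only [M3, hm_def, hMx_def, hn_def, ← Real.sqrt_eq_rpow]
    obtain ⟨sM, hsMpos, hMxeq⟩ : ∃ s : ℝ, 0 < s ∧ Mx = s^2 :=
      ⟨Real.sqrt Mx, Real.sqrt_pos.2 hMx, (Real.sq_sqrt hMx.le).symm⟩
    obtain ⟨sn, hsnpos, hneq⟩ : ∃ s : ℝ, 0 < s ∧ n = s^2 :=
      ⟨Real.sqrt n, Real.sqrt_pos.2 hn, (Real.sq_sqrt hn.le).symm⟩
    rw [hM3, hc_def, hMxeq, hneq, Real.sqrt_sq hsMpos.le, Real.sqrt_sq hsnpos.le]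
    rw [Real.sqrt_div pi_pos.le, Real.sqrt_div (by positivity : (0:ℝ) ≤ sn^2),
      Real.sqrt_sq hsnpos.le, Real.sqrt_sq hsMpos.le]
    rw [show (3:ℝ)/2 = 1 + 1/2 by norm_num, Real.rpow_add (by positivity), Real.rpow_one,
      ← Real.sqrt_eq_rpow, Real.sqrt_div (by positivity : (0:ℝ) ≤ sn^2),
      Real.sqrt_sq hsnpos.le, Real.sqrt_sq hsMpos.le]
    field_simp
    ring
  -- main inequality for each x
  have main : ∀ x ≥ (0:ℝ),
      |Fint δ γ h₁ x - Fint δ γ h₂ x| ≤ M3 δ γ * K := by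
    intro x hx
    have hficont : ∀ (h : ℝ → ℝ), ContinuousOn h (Set.Ici 0) →
        (∀ t ≥ (0:ℝ), 0 ≤ h t ∧ h t ≤ 1) →
        ContinuousOn (fun w => Real.exp (-(∫ z in (0:ℝ)..w, 2*z*(1+γ*h z)/(1+δ*h z))) *
          (1/(1+δ*h w))) (Set.Icc 0 x) := by
      intro h hcont hb
      have hgc := hgcont h hcont hb
      have hprim : ContinuousOn (fun w => ∫ z in (0:ℝ)..w, 2*z*(1+γ*h z)/(1+δ*h z))
          (Set.uIcc 0 x) := by
        apply intervalIntegral.continuousOn_primitive_interval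
        exact (hgc.mono (by rw [Set.uIcc_of_le hx]; exact Set.Icc_subset_Ici_self)).integrableOn_compact
          isCompact_uIcc
      rw [Set.uIcc_of_le hx] at hprim
      refine (Real.continuous_exp.comp_continuousOn hprim.neg).mul ?_
      apply ContinuousOn.div continuousOn_const
      · exact continuousOn_const.add (continuousOn_const.mul
          (hcont.mono Set.Icc_subset_Ici_self))
      · intro t ht
        exact (lt_of_lt_of_le hm (hden h hb t ht.1).1).ne'
    have hf₁i : IntervalIntegrable f₁ volume 0 x := by
      rw [hf₁_def]
      exact ((hficont h₁ hcont₁ hb₁).mono (by rw [Set.uIcc_of_le hx])).intervalIntegrable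
    have hf₂i : IntervalIntegrable f₂ volume 0 x := by
      rw [hf₂_def]
      exact ((hficont h₂ hcont₂ hb₂).mono (by rw [Set.uIcc_of_le hx])).intervalIntegrable
    have hbnd_cont : Continuous bnd := by
      rw [hbnd_def]; fun_prop
    have step1 : |Fint δ γ h₁ x - Fint δ γ h₂ x| ≤ |∫ w in (0:ℝ)..x, bnd w| := by
      have e1 : Fint δ γ h₁ x = ∫ w in (0:ℝ)..x, f₁ w := rfl
      have e2 : Fint δ γ h₂ x = ∫ w in (0:ℝ)..x, f₂ w := rfl
      have hFdiff : Fint δ γ h₁ x - Fint δ γ h₂ x = ∫ w in (0:ℝ)..x, (f₁ w - f₂ w) := by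
        rw [e1, e2, intervalIntegral.integral_sub hf₁i hf₂i]
      rw [hFdiff, ← Real.norm_eq_abs (∫ w in (0:ℝ)..x, (f₁ w - f₂ w))]
      refine intervalIntegral.norm_integral_le_abs_of_norm_le ?_
        (hbnd_cont.intervalIntegrable _ _)
      filter_upwards [MeasureTheory.ae_restrict_mem measurableSet_uIoc] with t ht
      rw [Set.uIoc_of_le hx] at ht
      rw [Real.norm_eq_abs]
      exact key t (le_of_lt ht.1)
    have step2 : |∫ w in (0:ℝ)..x, bnd w| ≤ ∫ w in Set.Ioi (0:ℝ), bnd w := by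
      rw [intervalIntegral.integral_of_le hx, abs_of_nonneg
        (integral_nonneg (fun w => hbnd_nonneg w))]
      apply setIntegral_mono_set ibnd
      · exact Filter.Eventually.of_forall (fun w => hbnd_nonneg w)
      · exact (Set.Ioc_subset_Ioi_self).eventuallyLE
    have step3 : ∫ w in Set.Ioi (0:ℝ), bnd w = M3 δ γ * K := by
      simp only [hsum]
      rw [MeasureTheory.integral_mul_const, MeasureTheory.integral_add
        (i0.const_mul _) (i2.const_mul _), MeasureTheory.integral_const_mul,
        MeasureTheory.integral_const_mul, hI0, hI2, hcoeff]
    exact le_trans step1 (le_trans step2 (le_of_eq step3))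
  refine ⟨main, ?_⟩
  intro L₁ L₂ t₁ t₂
  have habs : Tendsto (fun x => |Fint δ γ h₁ x - Fint δ γ h₂ x|) atTop (nhds |L₁ - L₂|) :=
    (t₁.sub t₂).abs
  refine le_of_tendsto habs ?_
  filter_upwards [eventually_ge_atTop (0:ℝ)] with x hx using main x hx
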